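/- (LCE acceleration for NGS/PGS, second case.) Let 1 ≤ l < k < r ≤ n be indices such that x_l ≻ x_k and x_m ≺ x_k for all m ∈ (l,k), and x_r ≻ x_k and x_m ≺ x_k for all m ∈ (k,r) (i.e., l = prev₋₁[k] and r = next₋₁[k]). If lce(l,k) < lce(k,r), then lce(l,r) = lce(l,k), x_l ≻ x_r, and max{j ∈ [1,r) : x_j ≻ x_r} = l. -/

import Mathlib

namespace LynArr

variable {α : Type*} [LinearOrder α]

/-- Strict lexicographic order on words:
`u ≺ v` iff `u` is a proper prefix of `v`, or at the first differing position `u` is smaller. -/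
def Llt (u v : List α) : Prop := List.Lex (· < ·) u v

/-- The suffix `x_i = x[i..n]` (1-based indexing). -/
def suff (x : List α) (i : ℕ) : List α := x.drop (i - 1)

/-- The subword `x[i..j]` (1-based, inclusive). -/
def sub (x : List α) (i j : ℕ) : List α := (x.drop (i - 1)).take (j - i + 1)

/-- `w` is a Lyndon word: nonempty and lexicographically smaller than
all of its nonempty proper suffixes. -/
def IsLyndon (w : List α) : Prop :=
  w ≠ [] ∧ ∀ k, 0 < k → k < w.length → Llt w (w.drop k)

/-- `w` is an inverse Lyndon word: nonempty and lexicographically greater than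
all of its nonempty proper suffixes. -/
def IsInvLyndon (w : List α) : Prop :=
  w ≠ [] ∧ ∀ k, 0 < k → k < w.length → Llt (w.drop k) w

/-- `lce x i j`: the length of the longest common prefix of the suffixes `x_i` and `x_j`. -/
def lce (x : List α) (i j : ℕ) : ℕ :=
  (((suff x i).zip (suff x j)).takeWhile fun p => p.1 == p.2).length


def lcpLen (u v : List α) : ℕ := ((u.zip v).takeWhile fun p => p.1 == p.2).length

theorem lcpLen_nil_left (v : List α) : lcpLen ([] : List α) v = 0 := rfl
theorem lcpLen_nil_right (u : List α) : lcpLen u ([] : List α) = 0 := by simp [lcpLen]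
theorem lcpLen_cons (a b : α) (u v : List α) :
    lcpLen (a::u) (b::v) = if a = b then lcpLen u v + 1 else 0 := by
  rw [lcpLen, List.zip_cons_cons, List.takeWhile_cons]
  by_cases h : a = b <;> simp [h, lcpLen]

theorem lcpLen_le_left (u v : List α) : lcpLen u v ≤ u.length := by
  induction u generalizing v with
  | nil => rw [lcpLen_nil_left]; exact Nat.zero_le _
  | cons a u ih =>
    cases v with
    | nil => rw [lcpLen_nil_right]; simp
    | cons b v =>
      rw [lcpLen_cons]; by_cases h : a = b <;> simp [h]
      exact ih v

theorem lcpLen_le_right (u v : List α) : lcpLen u v ≤ v.length := by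
  induction u generalizing v with
  | nil => rw [lcpLen_nil_left]; simp
  | cons a u ih =>
    cases v with
    | nil => rw [lcpLen_nil_right]; simp
    | cons b v =>
      rw [lcpLen_cons]; by_cases h : a = b <;> simp [h]
      exact ih v

theorem take_lcpLen (u v : List α) : u.take (lcpLen u v) = v.take (lcpLen u v) := by
  induction u generalizing v with
  | nil => rw [lcpLen_nil_left]; simp
  | cons a u ih =>
    cases v with
    | nil => rw [lcpLen_nil_right]; simp
    | cons b v =>
      rw [lcpLen_cons]; by_cases h : a = b <;> simp [h]
      exact ih v

theorem le_lcpLen_of_take_eq (u v : List α) (p : ℕ) (hpu : p ≤ u.length) (hpv : p ≤ v.length)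
    (h : u.take p = v.take p) : p ≤ lcpLen u v := by
  induction u generalizing v p with
  | nil => simp at hpu; omega
  | cons a u ih =>
    cases v with
    | nil => simp at hpv; omega
    | cons b v =>
      cases p with
      | zero => omega
      | succ p =>
        simp [List.take_succ_cons] at h
        rw [lcpLen_cons, if_pos h.1]
        have := ih v p (by simpa using hpu) (by simpa using hpv) h.2
        omega

theorem getElem_eq_of_lt_lcpLen (u v : List α) (m : ℕ) (hm : m < lcpLen u v)
    (hu : m < u.length) (hv : m < v.length) : u[m] = v[m] := by
  have h := take_lcpLen u v
  have h1 : u[m] = (u.take (lcpLen u v))[m]'(by simp; omega) := (List.getElem_take ..).symm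
  rw [h1]
  simp only [h]
  exact List.getElem_take ..

theorem lex_of_mismatch (u v : List α) (p : ℕ) (hpu : p < u.length) (hpv : p < v.length)
    (ht : u.take p = v.take p) (h : u[p] < v[p]) : List.Lex (·<·) u v := by
  induction u generalizing v p with
  | nil => simp at hpu
  | cons a u ih =>
    cases v with
    | nil => simp at hpv
    | cons b v =>
      cases p with
      | zero => exact List.Lex.rel h
      | succ p =>
        simp [List.take_succ_cons] at ht
        obtain ⟨rfl, ht⟩ := ht
        simp only [List.getElem_cons_succ] at h
        exact List.Lex.cons (ih v p (by simpa using hpu) (by simpa using hpv) ht h)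

theorem mismatch_of_lex (u v : List α) (h : List.Lex (·<·) u v) (hu : lcpLen u v < u.length) :
    ∃ (hv : lcpLen u v < v.length), u[lcpLen u v] < v[lcpLen u v] := by
  induction h with
  | nil => simp [lcpLen_nil_left] at hu
  | @rel a u b v hab =>
    have hL : lcpLen (a::u) (b::v) = 0 := by rw [lcpLen_cons, if_neg (ne_of_lt hab)]
    refine ⟨by simp [hL], ?_⟩
    simp only [hL, List.getElem_cons_zero]
    exact hab
  | @cons a u v h ih =>
    have hL : lcpLen (a::u) (a::v) = lcpLen u v + 1 := by rw [lcpLen_cons, if_pos rfl]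
    rw [hL] at hu
    have hu' : lcpLen u v < u.length := by simpa using hu
    obtain ⟨h1, h2⟩ := ih hu'
    refine ⟨by simp [hL]; omega, ?_⟩
    simp only [hL, List.getElem_cons_succ]
    exact h2

theorem lcpLen_comm (u v : List α) : lcpLen u v = lcpLen v u := by
  induction u generalizing v with
  | nil => rw [lcpLen_nil_left, lcpLen_nil_right]
  | cons a u ih =>
    cases v with
    | nil => rw [lcpLen_nil_left, lcpLen_nil_right]
    | cons b v =>
      rw [lcpLen_cons, lcpLen_cons]
      by_cases h : a = b
      · simp [h, ih]
      · simp [h, Ne.symm h]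


theorem lex_asymm' {α : Type*} [LinearOrder α] {u v : List α}
    (h1 : List.Lex (·<·) u v) (h2 : List.Lex (·<·) v u) : False :=
  asymm (r := List.Lex (·<·) (α := α)) h1 h2

theorem lex_trans' {α : Type*} [LinearOrder α] {u v w : List α}
    (h1 : List.Lex (·<·) u v) (h2 : List.Lex (·<·) v w) :
    List.Lex (·<·) u w := List.lt_trans h1 h2

theorem lce_eq_lcpLen {α : Type*} [LinearOrder α] (x : List α) (i j : ℕ) :
    lce x i j = lcpLen (suff x i) (suff x j) := rfl

/-- LCE acceleration for NGS/PGS, second case: with `l = prev₋₁[k]`, `r = next₋₁[k]`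
and `lce(l, k) < lce(k, r)`, we get `lce(l, r) = lce(l, k)`, `x_l ≻ x_r`, and
`prev₋₁[r] = l`. -/
theorem lce_acceleration_inverse_lt {α : Type*} [LinearOrder α] (x : List α) (n l k r : ℕ)
    (hn : n = x.length)
    (hl1 : 1 ≤ l) (hlk : l < k) (hkr : k < r) (hrn : r ≤ n)
    (hlk' : Llt (suff x k) (suff x l))
    (hlk'' : ∀ m, l < m → m < k → Llt (suff x m) (suff x k))
    (hkr' : Llt (suff x k) (suff x r))
    (hkr'' : ∀ m, k < m → m < r → Llt (suff x m) (suff x k))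
    (hlt : lce x l k < lce x k r) :
    lce x l r = lce x l k ∧ Llt (suff x r) (suff x l) ∧
      IsGreatest {j | 1 ≤ j ∧ j < r ∧ Llt (suff x r) (suff x j)} l := by
  set u := suff x l with hu
  set v := suff x k with hv
  set w := suff x r with hw
  simp only [lce_eq_lcpLen] at hlt ⊢
  set p := lcpLen u v with hp
  set q := lcpLen v w with hq
  -- basic length facts
  have hpv : p < v.length := lt_of_lt_of_le hlt (lcpLen_le_left v w)
  have hpw : p < w.length := lt_of_lt_of_le hlt (lcpLen_le_right v w)
  -- mismatch between v and u
  have hvu : lcpLen v u < v.length := by rw [lcpLen_comm v u, ← hp]; exact hpv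
  obtain ⟨hpu', hml⟩ := mismatch_of_lex v u hlk' hvu
  have epc : lcpLen v u = p := (lcpLen_comm u v) ▸ hp ▸ rfl
  simp only [epc] at hpu' hml
  -- hpu' : p < u.length, hml : v[p] < u[p]
  have hvw_eq : v[p]'hpv = w[p]'hpw := getElem_eq_of_lt_lcpLen v w p hlt hpv hpw
  have t1 : u.take p = v.take p := take_lcpLen u v
  have t2 : v.take p = w.take p := by
    have h := congrArg (List.take p) (take_lcpLen v w)
    rw [List.take_take, List.take_take, Nat.min_eq_left (le_of_lt hlt)] at h
    exact h
  have tuw : u.take p = w.take p := t1.trans t2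
  have hwu_mis : w[p]'hpw < u[p]'hpu' := hvw_eq ▸ hml
  have hlexwu : Llt w u := lex_of_mismatch w u p hpw hpu' tuw.symm hwu_mis
  have hLuw : lcpLen u w = p := by
    have h1 : p ≤ lcpLen u w := le_lcpLen_of_take_eq u w p (le_of_lt hpu') (le_of_lt hpw) tuw
    have h2 : ¬ p < lcpLen u w := by
      intro hc
      have := getElem_eq_of_lt_lcpLen u w p hc hpu' hpw
      exact absurd (this ▸ hwu_mis) (lt_irrefl _)
    omega
  refine ⟨hLuw, hlexwu, ⟨⟨hl1, lt_trans hlk hkr, hlexwu⟩, ?_⟩⟩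
  rintro j ⟨hj1, hjr, hjlex⟩
  by_contra hc
  push_neg at hc
  rcases lt_trichotomy j k with hjk | rfl | hjk
  · exact lex_asymm' hjlex (lex_trans' (hlk'' j hc hjk) hkr')
  · exact lex_asymm' hjlex hkr'
  · exact lex_asymm' hjlex (lex_trans' (hkr'' j hjk hjr) hkr')

end LynArr
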